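/- Let K > 0 and c < 0 be real numbers. Then for every real x, the function t ↦ K^{1-(c+it)} · e^{(c+it)x} / ((c+it)(c+it-1)) is Lebesgue integrable over ℝ and (1/(2π)) · ∫_{-∞}^{∞} K^{1-(c+it)} · e^{(c+it)x} / ((c+it)(c+it-1)) dt = max(K - e^x, 0), where i is the imaginary unit and the left-hand side is a complex integral whose value is the real number on the right. -/

import Mathlib

open MeasureTheory Complex Set Filter
open scoped Real FourierTransform

private lemma expRealIntegrableOn {a : ℝ} (ha : 0 < a) (b : ℝ) :
    IntegrableOn (fun s : ℝ => Real.exp (a * s)) (Iic b) := by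
  have hderiv : ∀ x : ℝ, HasDerivAt (fun s : ℝ => Real.exp (a * s) / a) (Real.exp (a * x)) x := by
    intro x
    have h := (((hasDerivAt_id x).const_mul a).exp).div_const a
    have heq : Real.exp (a * x) * a / a = Real.exp (a * x) := by field_simp
    rw [← heq]
    simpa using h
  have hcont : Continuous fun s : ℝ => Real.exp (a * s) :=
    Real.continuous_exp.comp (continuous_const.mul continuous_id)
  apply integrableOn_Iic_of_intervalIntegral_norm_bounded (Real.exp (a * b) / a) b
    (fun i => hcont.integrableOn_Ioc) tendsto_id
  filter_upwards with i
  have hI : ∫ x in i..b, Real.exp (a * x) = Real.exp (a * b) / a - Real.exp (a * i) / a := by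
    apply intervalIntegral.integral_eq_sub_of_hasDerivAt (fun x _ => hderiv x)
      (hcont.intervalIntegrable _ _)
  have : ∫ x in i..b, ‖Real.exp (a * x)‖ = ∫ x in i..b, Real.exp (a * x) := by
    simp [Real.norm_eq_abs, Real.abs_exp]
  rw [id_eq, this, hI]
  have : 0 ≤ Real.exp (a * i) / a := div_nonneg (Real.exp_pos _).le ha.le
  linarith

private lemma integrableOn_cexp_Iic {w : ℂ} (hw : 0 < w.re) (b : ℝ) :
    IntegrableOn (fun s : ℝ => Complex.exp (w * s)) (Iic b) := by
  have hcont : Continuous fun s : ℝ => Complex.exp (w * s) := by fun_prop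
  refine (expRealIntegrableOn hw b).mono' hcont.aestronglyMeasurable ?_
  filter_upwards with s
  simp [Complex.norm_exp, Complex.mul_re]

private lemma integral_cexp_Iic {w : ℂ} (hw : 0 < w.re) :
    ∫ s in Iic (0 : ℝ), Complex.exp (w * s) = 1 / w := by
  have hw0 : w ≠ 0 := fun h => by simp [h] at hw
  have hderiv : ∀ s : ℝ, HasDerivAt (fun s : ℝ => Complex.exp (w * s) / w)
      (Complex.exp (w * s)) s := by
    intro s
    have h : HasDerivAt (fun z : ℂ => Complex.exp (w * z) / w) (Complex.exp (w * s)) (s : ℂ) := by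
      have h1 := (((hasDerivAt_id (s : ℂ)).const_mul w).cexp).div_const w
      have heq : Complex.exp (w * s) * (w * 1) / w = Complex.exp (w * s) := by field_simp
      rw [← heq]
      simpa using h1
    exact h.comp_ofReal
  have htend : Tendsto (fun s : ℝ => Complex.exp (w * s) / w) atBot (nhds 0) := by
    rw [tendsto_zero_iff_norm_tendsto_zero]
    have : (fun s : ℝ => ‖Complex.exp (w * s) / w‖) = fun s => Real.exp (w.re * s) / ‖w‖ := by
      funext s
      simp [Complex.norm_exp, Complex.mul_re, map_div₀]
    rw [this]
    have h1 : Tendsto (fun s : ℝ => w.re * s) atBot atBot :=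
      tendsto_id.const_mul_atBot hw (l := atBot)
    simpa using (Real.tendsto_exp_atBot.comp h1).div_const ‖w‖
  have := integral_Iic_of_hasDerivAt_of_tendsto' (a := (0 : ℝ)) (m := 0)
    (fun s _ => hderiv s) (integrableOn_cexp_Iic hw 0) htend
  simpa [one_div] using this

private lemma u_ne_zero {c : ℝ} (hc : c < 0) (t : ℝ) : (c : ℂ) + t * I ≠ 0 := by
  intro h
  have := congrArg Complex.re h
  simp at this
  linarith

private lemma u_sub_one_ne_zero {c : ℝ} (hc : c < 0) (t : ℝ) : ((c : ℂ) + t * I) - 1 ≠ 0 := by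
  intro h
  have := congrArg Complex.re h
  simp at this
  linarith

private lemma continuous_u {c : ℝ} : Continuous fun t : ℝ => (c : ℂ) + t * I := by fun_prop

private lemma continuous_h {c : ℝ} (hc : c < 0) :
    Continuous fun t : ℝ => 1 / (((c : ℂ) + t * I) * (((c : ℂ) + t * I) - 1)) :=
  continuous_const.div
    ((continuous_u).mul (continuous_u.sub continuous_const))
    (fun t => mul_ne_zero (u_ne_zero hc t) (u_sub_one_ne_zero hc t))

private lemma norm_h_le {c : ℝ} (hc : c < 0) (t : ℝ) :
    ‖1 / (((c : ℂ) + t * I) * (((c : ℂ) + t * I) - 1))‖ ≤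
      (Real.sqrt (min (c ^ 2) 1))⁻¹ * (1 + t ^ 2)⁻¹ := by
  have hm : (0 : ℝ) < min (c ^ 2) 1 := lt_min (by nlinarith) one_pos
  set m := min (c ^ 2) 1 with hmdef
  have habs1 : ‖(c : ℂ) + t * I‖ ^ 2 = c ^ 2 + t ^ 2 := by
    rw [Complex.sq_norm, Complex.normSq_add_mul_I]
  have habs2 : ‖((c : ℂ) + t * I) - 1‖ ^ 2 = (c - 1) ^ 2 + t ^ 2 := by
    have : ((c : ℂ) + t * I) - 1 = ((c - 1 : ℝ) : ℂ) + (t : ℝ) * I := by push_cast; ring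
    rw [this, Complex.sq_norm, Complex.normSq_add_mul_I]
  have hkey : Real.sqrt m * (1 + t ^ 2) ≤
      ‖(c : ℂ) + t * I‖ * ‖((c : ℂ) + t * I) - 1‖ := by
    apply le_of_pow_le_pow_left₀ two_ne_zero (by positivity)
    have hsq : (Real.sqrt m * (1 + t ^ 2)) ^ 2 = m * (1 + t ^ 2) ^ 2 := by
      rw [mul_pow, Real.sq_sqrt hm.le]
    rw [hsq, mul_pow, habs1, habs2]
    have h1 : m ≤ c ^ 2 := min_le_left _ _
    have h2 : m ≤ 1 := min_le_right _ _
    have h3 : 1 ≤ (c - 1) ^ 2 := by nlinarith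
    nlinarith [sq_nonneg t, sq_nonneg (t ^ 2)]
  rw [norm_div, norm_one, norm_mul]
  rw [one_div, ← mul_inv]
  apply inv_anti₀ (by positivity)
  calc Real.sqrt m * (1 + t ^ 2) ≤ _ := hkey

private lemma integrable_h {c : ℝ} (hc : c < 0) :
    Integrable (fun t : ℝ => 1 / (((c : ℂ) + t * I) * (((c : ℂ) + t * I) - 1))) := by
  apply Integrable.mono' ((integrable_inv_one_add_sq).const_mul (Real.sqrt (min (c ^ 2) 1))⁻¹)
    (continuous_h hc).aestronglyMeasurable
  filter_upwards with t
  exact norm_h_le hc t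

private noncomputable def payoff (c : ℝ) : ℝ → ℂ := fun s =>
  ((max (1 - Real.exp s) 0 : ℝ) : ℂ) * Complex.exp (-(c : ℂ) * s)

private lemma continuous_payoff (c : ℝ) : Continuous (payoff c) := by
  unfold payoff
  fun_prop

private lemma payoff_eq_zero {c : ℝ} {s : ℝ} (hs : 0 < s) : payoff c s = 0 := by
  have : max (1 - Real.exp s) 0 = 0 := by
    apply max_eq_right
    have h := Real.add_one_le_exp s
    have := Real.exp_pos s
    nlinarith
  simp [payoff, this]

private lemma norm_payoff_le {c : ℝ} (s : ℝ) : ‖payoff c s‖ ≤ Real.exp (-c * s) := by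
  unfold payoff
  have h1 : (-(c : ℂ) * s).re = -c * s := by simp
  have h3 : ‖(((max (1 - Real.exp s) 0 : ℝ)) : ℂ)‖ = max (1 - Real.exp s) 0 := by
    rw [Complex.norm_real, Real.norm_eq_abs]
    exact abs_of_nonneg (le_max_right _ _)
  rw [norm_mul, h3, Complex.norm_exp, h1]
  have h2 : max (1 - Real.exp s) 0 ≤ 1 := by
    have := Real.exp_pos s
    apply max_le (by linarith) zero_le_one
  nlinarith [Real.exp_pos (-c * s), le_max_right (1 - Real.exp s) 0]

private lemma integrable_payoff {c : ℝ} (hc : c < 0) : Integrable (payoff c) := by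
  rw [← integrableOn_univ, ← Iic_union_Ioi (a := (0 : ℝ))]
  apply IntegrableOn.union
  · refine (expRealIntegrableOn (a := -c) (by linarith) 0).mono'
      (continuous_payoff c).aestronglyMeasurable.restrict ?_
    filter_upwards with s
    exact norm_payoff_le s
  · exact integrableOn_zero.congr_fun
      (fun s (hs : s ∈ Ioi (0 : ℝ)) => (payoff_eq_zero hs).symm) measurableSet_Ioi

private lemma fourier_payoff {c : ℝ} (hc : c < 0) (ξ : ℝ) :
    𝓕 (payoff c) ξ =
      1 / (((c : ℂ) + (2 * π * ξ) * I) * (((c : ℂ) + (2 * π * ξ) * I) - 1)) := by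
  set u : ℂ := (c : ℂ) + (2 * π * ξ) * I with hu
  have hure : u.re = c := by simp [hu]
  clear_value u
  have hw1 : (0 : ℝ) < (-u).re := by simp only [Complex.neg_re, hure]; linarith
  have hw2 : (0 : ℝ) < ((1 : ℂ) - u).re := by
    simp only [Complex.sub_re, Complex.one_re, hure]; linarith
  have hu0 : u ≠ 0 := fun h => by rw [h] at hure; simp at hure; linarith
  have hu1 : u - 1 ≠ 0 := fun h => by
    have : u = 1 := by linear_combination h
    rw [this] at hure; simp at hure; linarith
  rw [Real.fourier_real_eq_integral_exp_smul]
  have hsplit : (∫ v : ℝ, Complex.exp (↑(-2 * π * v * ξ) * I) • payoff c v)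
      = ∫ v in Iic (0 : ℝ), Complex.exp (↑(-2 * π * v * ξ) * I) • payoff c v := by
    refine (setIntegral_eq_integral_of_forall_compl_eq_zero (fun v hv => ?_)).symm
    have hv' : 0 < v := by simpa using hv
    rw [payoff_eq_zero hv', smul_zero]
  rw [hsplit]
  have hptwise : ∀ v ∈ Iic (0 : ℝ),
      Complex.exp (↑(-2 * π * v * ξ) * I) • payoff c v
        = Complex.exp (-u * v) - Complex.exp ((1 - u) * v) := by
    intro v hv
    have hmax : max (1 - Real.exp v) 0 = 1 - Real.exp v :=
      max_eq_left (by have := Real.exp_le_one_iff.mpr (mem_Iic.mp hv); linarith)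
    rw [smul_eq_mul, payoff, hmax]
    have h1 : (↑(-2 * π * v * ξ) * I) + -(c : ℂ) * v = -u * v := by
      rw [hu]; push_cast; ring
    have h2 : (↑(-2 * π * v * ξ) * I) + ((v : ℂ) + -(c : ℂ) * v) = (1 - u) * v := by
      rw [hu]; push_cast; ring
    calc Complex.exp (↑(-2 * π * v * ξ) * I) *
          (((1 - Real.exp v : ℝ) : ℂ) * Complex.exp (-(c : ℂ) * v))
        = Complex.exp ((↑(-2 * π * v * ξ) * I) + -(c : ℂ) * v)
            - Complex.exp ((↑(-2 * π * v * ξ) * I) + ((v : ℂ) + -(c : ℂ) * v)) := by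
          push_cast
          rw [Complex.exp_add, Complex.exp_add, Complex.exp_add]
          ring
      _ = _ := by rw [h1, h2]
  rw [setIntegral_congr_fun measurableSet_Iic hptwise]
  rw [integral_sub (integrableOn_cexp_Iic hw1 0) (integrableOn_cexp_Iic hw2 0)]
  rw [integral_cexp_Iic hw1, integral_cexp_Iic hw2]
  have h1u : (1 : ℂ) - u ≠ 0 := fun h => hu1 (by linear_combination -h)
  have hun : -u ≠ 0 := neg_ne_zero.mpr hu0
  field_simp
  ring

/-- Bromwich inversion for the put payoff: for `K > 0`, `c < 0` and every real `x`,
`(1/(2π)) ∫ K^{1-(c+it)} e^{(c+it)x} / ((c+it)(c+it-1)) dt = (K - e^x)_+`. -/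
theorem put_payoff_laplace_inversion (K c : ℝ) (hK : 0 < K) (hc : c < 0) (x : ℝ) :
    Integrable (fun t : ℝ =>
      (K : ℂ) ^ ((1 : ℂ) - ((c : ℂ) + t * Complex.I)) *
        Complex.exp (((c : ℂ) + t * Complex.I) * x) /
        (((c : ℂ) + t * Complex.I) * (((c : ℂ) + t * Complex.I) - 1))) ∧
    (1 / (2 * Real.pi) : ℂ) * ∫ t : ℝ,
        (K : ℂ) ^ ((1 : ℂ) - ((c : ℂ) + t * Complex.I)) *
          Complex.exp (((c : ℂ) + t * Complex.I) * x) /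
          (((c : ℂ) + t * Complex.I) * (((c : ℂ) + t * Complex.I) - 1))
      = ((max (K - Real.exp x) 0 : ℝ) : ℂ) := by
  have hK0 : (K : ℂ) ≠ 0 := Complex.ofReal_ne_zero.mpr hK.ne'
  set k : ℝ := Real.log K with hk
  set y : ℝ := x - k with hy
  set F : ℝ → ℂ := fun t : ℝ =>
      (K : ℂ) ^ ((1 : ℂ) - ((c : ℂ) + t * Complex.I)) *
        Complex.exp (((c : ℂ) + t * Complex.I) * x) /
        (((c : ℂ) + t * Complex.I) * (((c : ℂ) + t * Complex.I) - 1)) with hF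
  have hFeq : ∀ t : ℝ, F t = Complex.exp ((k : ℂ) + ((c : ℂ) + t * I) * (y : ℂ)) *
      (1 / (((c : ℂ) + t * I) * (((c : ℂ) + t * I) - 1))) := by
    intro t
    rw [hF]
    simp only
    rw [Complex.cpow_def_of_ne_zero hK0, ← Complex.ofReal_log hK.le, ← hk,
      ← Complex.exp_add, div_eq_mul_one_div]
    congr 2
    rw [hy]
    push_cast
    ring
  -- Integrability of F
  have hFint : Integrable F := by
    have : F = fun t : ℝ => Complex.exp ((k : ℂ) + ((c : ℂ) + t * I) * (y : ℂ)) *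
        (1 / (((c : ℂ) + t * I) * (((c : ℂ) + t * I) - 1))) := funext hFeq
    rw [this]
    apply (integrable_h hc).bdd_mul
    · exact (Complex.continuous_exp.comp (by fun_prop)).aestronglyMeasurable
    · refine (Filter.Eventually.of_forall (fun t => ?_) : ∀ᵐ (t : ℝ) ∂volume,
        ‖Complex.exp ((k : ℂ) + ((c : ℂ) + t * I) * (y : ℂ))‖ ≤ Real.exp (k + c * y))
      rw [Complex.norm_exp]
      apply le_of_eq
      congr 1
      simp [Complex.add_re, Complex.mul_re]
  refine ⟨hFint, ?_⟩
  -- Integrability of the Fourier transform of payoff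
  have hfour : Integrable (𝓕 (payoff c)) := by
    have heq : 𝓕 (payoff c) = fun ξ : ℝ =>
        (fun t : ℝ => 1 / (((c : ℂ) + t * I) * (((c : ℂ) + t * I) - 1))) (2 * π * ξ) := by
      funext ξ
      rw [fourier_payoff hc ξ]
      norm_cast
    rw [heq]
    exact (integrable_h hc).comp_mul_left' (by positivity : (0 : ℝ) < 2 * π).ne'
  -- Fourier inversion
  have hinv : ∫ ξ : ℝ, Complex.exp ((2 * π * ξ * y : ℝ) * I) * 𝓕 (payoff c) ξ
      = payoff c y := by
    have h0 := (integrable_payoff hc).fourierInv_fourier_eq hfour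
      (continuous_payoff c).continuousAt (v := y)
    rw [Real.fourierInv_eq_fourier_neg,
      Real.fourier_real_eq_integral_exp_smul] at h0
    rw [← h0]
    apply integral_congr_ae
    filter_upwards with v
    rw [smul_eq_mul]
    congr 2
    push_cast
    ring
  -- substitution t = 2πξ
  have hπ : (0 : ℝ) < 2 * π := by positivity
  have hsub : (∫ ξ : ℝ, F (2 * π * ξ)) = (2 * π)⁻¹ • ∫ t : ℝ, F t := by
    rw [MeasureTheory.Measure.integral_comp_mul_left F (2 * π), abs_of_pos (by positivity)]
  have hlhs : (1 / (2 * Real.pi) : ℂ) * (∫ t : ℝ, F t) = ∫ ξ : ℝ, F (2 * π * ξ) := by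
    rw [hsub, Complex.real_smul]
    push_cast
    ring
  -- compute ∫ ξ, F (2πξ)
  have hFcomp : ∀ ξ : ℝ, F (2 * π * ξ) = Complex.exp ((k + c * y : ℝ)) *
      (Complex.exp ((2 * π * ξ * y : ℝ) * I) * 𝓕 (payoff c) ξ) := by
    intro ξ
    rw [hFeq (2 * π * ξ), fourier_payoff hc ξ]
    have hcast : ((2 * π * ξ : ℝ) : ℂ) = 2 * (π : ℂ) * (ξ : ℂ) := by push_cast; ring
    rw [hcast]
    have hcomb : ∀ Q : ℂ, Complex.exp ((k + c * y : ℝ)) *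
        (Complex.exp ((2 * π * ξ * y : ℝ) * I) * Q)
        = Complex.exp (((k + c * y : ℝ) : ℂ) + ((2 * π * ξ * y : ℝ) : ℂ) * I) * Q := by
      intro Q
      rw [Complex.exp_add]
      ring
    rw [hcomb]
    congr 2
    push_cast
    ring
  have hint2 : (∫ ξ : ℝ, F (2 * π * ξ))
      = Complex.exp ((k + c * y : ℝ)) * payoff c y := by
    rw [← hinv, ← integral_const_mul]
    exact integral_congr_ae (Filter.Eventually.of_forall hFcomp)
  rw [hlhs, hint2]
  -- final algebra
  simp only [payoff]
  rw [show Complex.exp ((k + c * y : ℝ)) *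
      (((max (1 - Real.exp y) 0 : ℝ) : ℂ) * Complex.exp (-(c : ℂ) * y))
      = ((max (1 - Real.exp y) 0 : ℝ) : ℂ) *
        (Complex.exp ((k + c * y : ℝ)) * Complex.exp (-(c : ℂ) * y)) by ring]
  rw [← Complex.exp_add]
  have hexp : ((k + c * y : ℝ) : ℂ) + -(c : ℂ) * y = ((k : ℝ) : ℂ) := by push_cast; ring
  rw [hexp, ← Complex.ofReal_exp, ← Complex.ofReal_mul]
  congr 1
  rw [Real.exp_log hK]
  rw [mul_comm, mul_max_of_nonneg _ _ hK.le, mul_zero]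
  congr 1
  have : K * Real.exp y = Real.exp x := by
    rw [← Real.exp_log hK, ← Real.exp_add, hy]
    rw [hk]
    ring_nf
  rw [mul_sub, mul_one, this]
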